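/- For integers k ≥ 0 and l ≤ −2 the double sum ∑_{a=0}^{k−2} ∑_{b=0}^{−l+1} (−1)^{a+b} C(2k,a)·C(−l+1,b)·C(k−a−2l−b−1, −b−2l+1) equals −(−1)^{l+k}·C(2k+2l−2, k+l+1) − δ_{k+l,−1} − 2·δ_{k+l,0}. -/

import Mathlib

/-- Generalized binomial coefficient: `0` for `k < 0`; usual binomial for `n ≥ 0`
(zero when `k > n`); for `n < 0`: `(-1)^k * C (k - n - 1) k` when `k ≥ 0`,
`(-1)^(n-k) * C (-k - 1) (n - k)` when `k ≤ n`, and `0` otherwise. -/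
def C (n k : ℤ) : ℤ :=
  if 0 ≤ n then (if 0 ≤ k then (n.toNat.choose k.toNat : ℤ) else 0)
  else if 0 ≤ k then (-1) ^ k.toNat * ((k - n - 1).toNat.choose k.toNat : ℤ)
  else if k ≤ n then (-1) ^ (n - k).toNat * ((-k - 1).toNat.choose (n - k).toNat : ℤ)
  else 0

section Sec1
open Polynomial Finset

lemma sum_inner_alt (p N r : ℕ) (hpN : p ≤ N) (hpr : p ≤ r) :
    ∑ b ∈ Finset.range (p+1), (-1:ℤ)^b * (p.choose b) * ((N-b).choose (r-b)) = ((N-p).choose r : ℤ) := by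
  have h1 : (∑ b ∈ Finset.range (p+1), (-X:ℤ[X])^b * (1+X)^(p-b) * (p.choose b : ℤ[X])) = 1 := by
    rw [← add_pow]
    norm_num
  have h2 : ((1:ℤ[X]) + X)^(N-p) =
      ∑ b ∈ Finset.range (p+1), (-X:ℤ[X])^b * (1+X)^(N-b) * (p.choose b : ℤ[X]) := by
    calc ((1:ℤ[X]) + X)^(N-p)
        = (∑ b ∈ Finset.range (p+1), (-X:ℤ[X])^b * (1+X)^(p-b) * (p.choose b : ℤ[X])) * (1+X)^(N-p) := by
          rw [h1, one_mul]
      _ = _ := by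
          rw [Finset.sum_mul]
          refine Finset.sum_congr rfl fun b hb => ?_
          have hb' : b ≤ p := Nat.lt_succ_iff.mp (Finset.mem_range.mp hb)
          have hadd : (p - b) + (N - p) = N - b := by omega
          calc (-X:ℤ[X])^b * (1+X)^(p-b) * (p.choose b : ℤ[X]) * (1+X)^(N-p)
              = (-X:ℤ[X])^b * ((1+X)^(p-b) * (1+X)^(N-p)) * (p.choose b : ℤ[X]) := by ring
            _ = _ := by rw [← pow_add, hadd]
  have h3 := congrArg (fun q : ℤ[X] => q.coeff r) h2
  simp only [finset_sum_coeff] at h3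
  rw [coeff_one_add_X_pow] at h3
  rw [h3]
  refine Finset.sum_congr rfl fun b hb => ?_
  have hb' : b ≤ p := Nat.lt_succ_iff.mp (Finset.mem_range.mp hb)
  have hbr : b ≤ r := hb'.trans hpr
  have hrw : (-X:ℤ[X])^b * (1+X)^(N-b) * (p.choose b : ℤ[X])
      = Polynomial.C ((-1)^b * (p.choose b) : ℤ) * (X^b * (1+X)^(N-b)) := by
    rw [map_mul, map_pow, map_neg, map_one, map_natCast]
    ring
  rw [hrw, coeff_C_mul]
  have hx : (X^b * ((1:ℤ[X])+X)^(N-b)).coeff r = (((1:ℤ[X])+X)^(N-b)).coeff (r-b) := by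
    conv_lhs => rw [show r = (r-b) + b by omega]
    exact coeff_X_pow_mul _ _ _
  rw [hx, coeff_one_add_X_pow]
end Sec1

section Sec2
open Finset

noncomputable def Gq (q : ℕ) : PowerSeries ℤ := PowerSeries.mk fun j => (-1)^j * ((q + j).choose j)

lemma coeff_one_add_X_pow_ps (n j : ℕ) :
    (PowerSeries.coeff (R := ℤ) j) ((1 + PowerSeries.X)^n) = n.choose j := by
  have : ((1 + PowerSeries.X : PowerSeries ℤ))^n = (((1 + Polynomial.X : Polynomial ℤ))^n : Polynomial ℤ) := by
    push_cast
    norm_num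
  rw [this, Polynomial.coeff_coe, Polynomial.coeff_one_add_X_pow]

lemma Gq_inv (q : ℕ) : (1 + PowerSeries.X : PowerSeries ℤ)^(q+1) * Gq q = 1 := by
  induction q with
  | zero =>
    ext n
    cases n with
    | zero => simp [Gq, PowerSeries.coeff_zero_eq_constantCoeff, map_mul]
    | succ n =>
      rw [pow_one, add_mul, one_mul, map_add, PowerSeries.coeff_succ_X_mul]
      simp [Gq, pow_succ]
  | succ q ih =>
    have step : (1 + PowerSeries.X : PowerSeries ℤ) * Gq (q+1) = Gq q := by
      ext n
      rw [add_mul, one_mul, map_add]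
      cases n with
      | zero => simp [Gq, PowerSeries.coeff_zero_X_mul]
      | succ n =>
        rw [PowerSeries.coeff_succ_X_mul]
        simp only [Gq, PowerSeries.coeff_mk]
        have hpascal : (q + 1 + (n+1)).choose (n+1) = (q + (n+1)).choose n + (q + (n+1)).choose (n+1) := by
          have e : q + 1 + (n+1) = (q + (n+1)) + 1 := by omega
          rw [e, Nat.choose_succ_succ]
        have e2 : q + 1 + n = q + (n + 1) := by omega
        rw [hpascal, e2]
        push_cast
        ring
    calc (1 + PowerSeries.X : PowerSeries ℤ)^(q+2) * Gq (q+1)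
        = (1 + PowerSeries.X : PowerSeries ℤ)^(q+1) * ((1 + PowerSeries.X) * Gq (q+1)) := by ring
      _ = 1 := by rw [step, ih]

lemma sum_outer_alt (n q A : ℕ) (h : q + 1 ≤ n) :
    ∑ j ∈ Finset.range (A+1), (-1:ℤ)^j * ((q+j).choose j) * (n.choose (A-j)) = ((n - (q+1)).choose A : ℤ) := by
  have h1 : Gq q * (1 + PowerSeries.X : PowerSeries ℤ)^n = (1 + PowerSeries.X)^(n - (q+1)) := by
    have e : (1 + PowerSeries.X : PowerSeries ℤ)^n = (1 + PowerSeries.X)^(q+1) * (1 + PowerSeries.X)^(n-(q+1)) := by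
      rw [← pow_add]
      congr 1
      omega
    rw [e, ← mul_assoc, mul_comm (Gq q), Gq_inv, one_mul]
  have h2 := congrArg (PowerSeries.coeff (R := ℤ) A) h1
  rw [PowerSeries.coeff_mul, coeff_one_add_X_pow_ps, Finset.Nat.sum_antidiagonal_eq_sum_range_succ_mk] at h2
  rw [← h2]
  refine Finset.sum_congr rfl fun j hj => ?_
  simp only [Gq, PowerSeries.coeff_mk, coeff_one_add_X_pow_ps]
end Sec2


lemma neg_one_pow_sub_int (A j : ℕ) (h : j ≤ A) : ((-1:ℤ))^(A-j) = (-1)^A * (-1)^j := by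
  have e : A + j = (A - j) + 2*j := by omega
  have h2 : ((-1:ℤ))^(A+j) = (-1)^(A-j) := by
    rw [e, pow_add, pow_mul]
    norm_num
  rw [← h2, pow_add]

lemma big_reduce (k m : ℕ) (hm : 2 ≤ m) :
    ∑ a ∈ Finset.range (k-1), ∑ b ∈ Finset.range (m+2),
      (-1:ℤ)^(a+b) * ((2*k).choose a) * ((m+1).choose b) * ((k+2*m-1-a-b).choose (2*m+1-b))
    = ∑ a ∈ Finset.range (k-1), (-1:ℤ)^a * ((2*k).choose a) * ((k+m-2-a).choose (2*m+1)) := by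
  refine Finset.sum_congr rfl fun a ha => ?_
  have ha' : a + 2 ≤ k := by
    have := Finset.mem_range.mp ha
    omega
  have key := sum_inner_alt (m+1) (k+2*m-1-a) (2*m+1) (by omega) (by omega)
  have e : (k+2*m-1-a) - (m+1) = k+m-2-a := by omega
  rw [e] at key
  calc ∑ b ∈ Finset.range (m+2),
      (-1:ℤ)^(a+b) * ((2*k).choose a) * ((m+1).choose b) * ((k+2*m-1-a-b).choose (2*m+1-b))
      = ((-1:ℤ)^a * ((2*k).choose a)) * ∑ b ∈ Finset.range (m+2),
          (-1:ℤ)^b * ((m+1).choose b) * (((k+2*m-1-a)-b).choose (2*m+1-b)) := by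
        rw [Finset.mul_sum]
        refine Finset.sum_congr rfl fun b _ => ?_
        have e2 : (k+2*m-1-a) - b = k+2*m-1-a-b := by omega
        rw [e2, pow_add]
        ring
    _ = ((-1:ℤ)^a * ((2*k).choose a)) * ((k+m-2-a).choose (2*m+1)) := by rw [key]
    _ = _ := by ring

lemma main_int_zero (k m : ℕ) (hm : 2 ≤ m) (hk : k ≤ m + 2) :
    ∑ a ∈ Finset.range (k-1), (-1:ℤ)^a * ((2*k).choose a) * ((k+m-2-a).choose (2*m+1)) = 0 := by
  refine Finset.sum_eq_zero fun a ha => ?_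
  have h0 : (k+m-2-a).choose (2*m+1) = 0 := Nat.choose_eq_zero_of_lt (by omega)
  rw [h0]
  norm_num

lemma main_int_big (k m : ℕ) (hm : 2 ≤ m) (hk : m + 3 ≤ k) :
    ∑ a ∈ Finset.range (k-1), (-1:ℤ)^a * ((2*k).choose a) * ((k+m-2-a).choose (2*m+1))
    = (-1)^(k+m+1) * ((2*k-2*m-2).choose (k-m+1)) := by
  have hsub : Finset.range (k-m-2) ⊆ Finset.range (k-1) := Finset.range_subset_range.mpr (by omega)
  have htrunc : ∑ a ∈ Finset.range (k-1), (-1:ℤ)^a * ((2*k).choose a) * ((k+m-2-a).choose (2*m+1))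
      = ∑ a ∈ Finset.range (k-m-2), (-1:ℤ)^a * ((2*k).choose a) * ((k+m-2-a).choose (2*m+1)) := by
    refine (Finset.sum_subset hsub fun a _ ha => ?_).symm
    have haa : k-m-2 ≤ a := by simpa using ha
    have h0 : (k+m-2-a).choose (2*m+1) = 0 := Nat.choose_eq_zero_of_lt (by omega)
    rw [h0]
    norm_num
  rw [htrunc]
  have hrefl := Finset.sum_range_reflect
    (fun a => (-1:ℤ)^a * ((2*k).choose a) * ((k+m-2-a).choose (2*m+1))) (k-m-2)
  rw [← hrefl]
  have hstep : ∀ j ∈ Finset.range (k-m-2),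
      (-1:ℤ)^(k-m-2-1-j) * ((2*k).choose (k-m-2-1-j)) * ((k+m-2-(k-m-2-1-j)).choose (2*m+1))
      = (-1)^(k-m-3) * ((-1:ℤ)^j * ((2*m+1+j).choose j) * ((2*k).choose (k-m-3-j))) := by
    intro j hj
    have hj' : j < k-m-2 := Finset.mem_range.mp hj
    have e1 : k-m-2-1-j = k-m-3-j := by omega
    have e2 : k+m-2-(k-m-3-j) = 2*m+1+j := by omega
    have e3 : (2*m+1+j).choose (2*m+1) = (2*m+1+j).choose j := by
      have := Nat.choose_symm (n := 2*m+1+j) (k := j) (by omega)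
      rw [show 2*m+1+j-j = 2*m+1 by omega] at this
      exact this
    rw [e1, e2, e3, neg_one_pow_sub_int (k-m-3) j (by omega)]
    ring
  rw [Finset.sum_congr rfl hstep, ← Finset.mul_sum]
  have houter := sum_outer_alt (2*k) (2*m+1) (k-m-3) (by omega)
  rw [show k-m-2 = (k-m-3)+1 by omega, houter]
  have e4 : 2*k - (2*m+1+1) = 2*k-2*m-2 := by omega
  have e5 : (2*k-2*m-2).choose (k-m-3) = (2*k-2*m-2).choose (k-m+1) := by
    have := Nat.choose_symm (n := 2*k-2*m-2) (k := k-m+1) (by omega)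
    rw [show 2*k-2*m-2-(k-m+1) = k-m-3 by omega] at this
    exact this
  have e6 : ((-1:ℤ))^(k-m-3) = (-1)^(k+m+1) := by
    have e : k+m+1 = (k-m-3) + 2*(m+2) := by omega
    rw [e, pow_add, pow_mul]
    norm_num
  rw [e4, e5, e6]

lemma C_natCast (n j : ℕ) : C (n : ℤ) (j : ℤ) = n.choose j := by
  simp [C]


/-- For `k ≥ 0`, `l ≤ −2`:
`∑_{a=0}^{k−2} ∑_{b=0}^{−l+1} (−1)^{a+b} C(2k,a) C(−l+1,b) C(k−a−2l−b−1, −b−2l+1)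
  = −(−1)^{l+k} C(2k+2l−2, k+l+1) − δ_{k+l,−1} − 2 δ_{k+l,0}`. -/
theorem stmt9 (k : ℕ) (l : ℤ) (hl : l ≤ -2) :
    ∑ a ∈ Finset.range (k - 1), ∑ b ∈ Finset.range (-l + 2).toNat,
        (-1 : ℚ) ^ (a + b) *
          (C (2 * k) a * C (-l + 1) b *
            C ((k : ℤ) - a - 2 * l - b - 1) (-(b : ℤ) - 2 * l + 1) : ℤ) =
      -((-1 : ℚ) ^ (l + (k : ℤ))) * (C (2 * k + 2 * l - 2) ((k : ℤ) + l + 1) : ℤ) -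
        (if (k : ℤ) + l = -1 then 1 else 0) - 2 * (if (k : ℤ) + l = 0 then 1 else 0) := by
  obtain ⟨m, hm, rfl⟩ : ∃ m : ℕ, 2 ≤ m ∧ l = -(m:ℤ) := ⟨(-l).toNat, by omega, by omega⟩
  rw [show ((-(-(m:ℤ)) + 2).toNat) = m + 2 from by omega]
  have hL : ∑ a ∈ Finset.range (k - 1), ∑ b ∈ Finset.range (m + 2),
        (-1 : ℚ) ^ (a + b) *
          (C (2 * k) a * C (-(-(m:ℤ)) + 1) b *
            C ((k : ℤ) - a - 2 * (-(m:ℤ)) - b - 1) (-(b : ℤ) - 2 * (-(m:ℤ)) + 1) : ℤ)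
      = ((∑ a ∈ Finset.range (k-1), ∑ b ∈ Finset.range (m+2),
          (-1:ℤ)^(a+b) * ((2*k).choose a) * ((m+1).choose b) * ((k+2*m-1-a-b).choose (2*m+1-b)) : ℤ) : ℚ) := by
    rw [Int.cast_sum]
    refine Finset.sum_congr rfl fun a ha => ?_
    rw [Int.cast_sum]
    refine Finset.sum_congr rfl fun b hb => ?_
    have ha' : a + 2 ≤ k := by
      have := Finset.mem_range.mp ha; omega
    have hb' : b ≤ m + 1 := by
      have := Finset.mem_range.mp hb; omega
    have hC1 : C (2 * (k:ℤ)) (a:ℤ) = ((2*k).choose a : ℤ) := by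
      rw [show (2 * (k:ℤ)) = ((2*k : ℕ):ℤ) by push_cast; ring]
      exact C_natCast _ _
    have hC2 : C (-(-(m:ℤ)) + 1) (b:ℤ) = ((m+1).choose b : ℤ) := by
      rw [show (-(-(m:ℤ)) + 1) = ((m+1 : ℕ):ℤ) by push_cast; ring]
      exact C_natCast _ _
    have hC3 : C ((k:ℤ) - a - 2 * (-(m:ℤ)) - b - 1) (-(b:ℤ) - 2 * (-(m:ℤ)) + 1)
        = ((k+2*m-1-a-b).choose (2*m+1-b) : ℤ) := by
      rw [show ((k:ℤ) - a - 2 * (-(m:ℤ)) - b - 1) = ((k+2*m-1-a-b : ℕ):ℤ) by omega,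
          show (-(b:ℤ) - 2 * (-(m:ℤ)) + 1) = ((2*m+1-b : ℕ):ℤ) by omega]
      exact C_natCast _ _
    rw [hC1, hC2, hC3]
    push_cast
    ring
  rw [hL, big_reduce k m hm]
  by_cases hk3 : m + 3 ≤ k
  · rw [main_int_big k m hm hk3]
    rw [if_neg (by omega), if_neg (by omega)]
    rw [show (2 * (k:ℤ) + 2 * (-(m:ℤ)) - 2) = ((2*k-2*m-2 : ℕ):ℤ) by omega,
        show ((k:ℤ) + -(m:ℤ) + 1) = ((k-m+1 : ℕ):ℤ) by omega, C_natCast]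
    rw [show (-(m:ℤ) + (k:ℤ)) = ((k - m : ℕ) : ℤ) by omega, zpow_natCast]
    have hp : ((-1:ℚ))^(k+m+1) = -((-1:ℚ))^(k-m) := by
      rw [show k+m+1 = (k-m) + (2*m+1) by omega, pow_add, pow_succ, pow_mul, neg_one_sq, one_pow]
      ring
    push_cast
    rw [hp]
    ring
  · rw [main_int_zero k m hm (by omega)]
    by_cases h1 : k = m + 2
    · rw [show (2 * (k:ℤ) + 2 * (-(m:ℤ)) - 2) = ((2 : ℕ):ℤ) by omega,
          show ((k:ℤ) + -(m:ℤ) + 1) = ((3 : ℕ):ℤ) by omega, C_natCast]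
      rw [if_neg (by omega), if_neg (by omega)]
      norm_num
    · by_cases h2 : k = m + 1
      · rw [show (2 * (k:ℤ) + 2 * (-(m:ℤ)) - 2) = ((0 : ℕ):ℤ) by omega,
            show ((k:ℤ) + -(m:ℤ) + 1) = ((2 : ℕ):ℤ) by omega, C_natCast]
        rw [if_neg (by omega), if_neg (by omega)]
        norm_num
      · by_cases h3 : k = m
        · rw [show (2 * (k:ℤ) + 2 * (-(m:ℤ)) - 2) = (-2:ℤ) by omega,
              show ((k:ℤ) + -(m:ℤ) + 1) = (1:ℤ) by omega]
          rw [if_neg (by omega), if_pos (by omega)]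
          rw [show (-(m:ℤ) + (k:ℤ)) = (0:ℤ) by omega, zpow_zero]
          norm_num [C]
        · by_cases h4 : k + 1 = m
          · rw [show (2 * (k:ℤ) + 2 * (-(m:ℤ)) - 2) = (-4:ℤ) by omega,
                show ((k:ℤ) + -(m:ℤ) + 1) = (0:ℤ) by omega]
            rw [if_pos (by omega), if_neg (by omega)]
            rw [show (-(m:ℤ) + (k:ℤ)) = (-1:ℤ) by omega, zpow_neg_one]
            norm_num [C]
          · have hC0 : C (2 * (k:ℤ) + 2 * (-(m:ℤ)) - 2) ((k:ℤ) + -(m:ℤ) + 1) = 0 := by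
              unfold C
              rw [if_neg (by omega), if_neg (by omega), if_neg (by omega)]
            rw [hC0, if_neg (by omega), if_neg (by omega)]
            norm_num
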